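/- Let A, B, C be a partition of the m + n coordinate indices of X × Y. The following are equivalent: (i) there exist functions f on the (A∪C)-subtuples, g on the (B∪C)-subtuples, and a strictly positive h : X → ℝ such that P(y|x) = f(z_A, z_C) · g(z_B, z_C) · h(x) for all (x, y), where z = (x, y); (ii) ⟨u_I(x), v_J(y)⟩ = 0 for all x ∈ X, y ∈ Y and all I ⊆ {1,…,m}, J ⊆ {1,…,n} with J ≠ ∅ such that the disjoint union I ⊔ J (as a set of coordinate indices of X × Y) meets both A and B. -/

import Mathlib

open Finset
open scoped RealInnerProductSpace

/-- Averaging operator π_J. -/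
noncomputable def piAvg {ι : Type*} [Fintype ι] [DecidableEq ι] {Z : ι → Type*}
    [∀ i, Fintype (Z i)] [∀ i, DecidableEq (Z i)] {V : Type*} [AddCommGroup V] [Module ℝ V]
    (J : Finset ι) (w : (∀ i, Z i) → V) : (∀ i, Z i) → V :=
  fun z => (∏ i ∈ Jᶜ, (Fintype.card (Z i) : ℝ))⁻¹ •
    ∑ z' ∈ Finset.univ.filter (fun z' : ∀ i, Z i => ∀ i ∈ J, z' i = z i), w z'

/-- Interaction projection Q_I. -/
noncomputable def Qop {ι : Type*} [Fintype ι] [DecidableEq ι] {Z : ι → Type*}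
    [∀ i, Fintype (Z i)] [∀ i, DecidableEq (Z i)] {V : Type*} [AddCommGroup V] [Module ℝ V]
    (I : Finset ι) (w : (∀ i, Z i) → V) : (∀ i, Z i) → V :=
  ∑ J ∈ I.powerset, ((-1 : ℝ) ^ (I \ J).card) • piAvg J w

section General
variable {ι : Type*} [Fintype ι] [DecidableEq ι] {Z : ι → Type*}
    [∀ i, Fintype (Z i)] [∀ i, DecidableEq (Z i)] {V : Type*} [AddCommGroup V] [Module ℝ V]

lemma piAvg_congr (J : Finset ι) (w : (∀ i, Z i) → V) {z z' : ∀ i, Z i}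
    (h : ∀ i ∈ J, z i = z' i) : piAvg J w z = piAvg J w z' := by
  unfold piAvg
  congr 1
  refine Finset.sum_congr (Finset.filter_congr ?_) (fun _ _ => rfl)
  intro z'' _
  constructor <;> intro hz i hi
  · rw [← h i hi]; exact hz i hi
  · rw [h i hi]; exact hz i hi

lemma Qop_congr (I : Finset ι) (w : (∀ i, Z i) → V) {z z' : ∀ i, Z i}
    (h : ∀ i ∈ I, z i = z' i) : Qop I w z = Qop I w z' := by
  unfold Qop
  rw [Finset.sum_apply, Finset.sum_apply]
  refine Finset.sum_congr rfl fun J hJ => ?_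
  rw [Pi.smul_apply, Pi.smul_apply,
    piAvg_congr J w (fun i hi => h i (Finset.mem_powerset.1 hJ hi))]

lemma piAvg_add (J : Finset ι) (a b : (∀ i, Z i) → V) (z : ∀ i, Z i) :
    piAvg J (fun z => a z + b z) z = piAvg J a z + piAvg J b z := by
  simp [piAvg, Finset.sum_add_distrib, smul_add]

lemma Qop_add (I : Finset ι) (a b : (∀ i, Z i) → V) (z : ∀ i, Z i) :
    Qop I (fun z => a z + b z) z = Qop I a z + Qop I b z := by
  simp only [Qop, Finset.sum_apply, Pi.smul_apply, piAvg_add, smul_add,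
    Finset.sum_add_distrib]

variable [∀ i, Nonempty (Z i)]

lemma piAvg_insert_of_indep {J : Finset ι} {j : ι} (hjJ : j ∉ J)
    (w : (∀ i, Z i) → V) (hw : ∀ z a, w (Function.update z j a) = w z) (z : ∀ i, Z i) :
    piAvg (insert j J) w z = piAvg J w z := by
  classical
  have key : ∑ z' ∈ Finset.univ.filter (fun z' : ∀ i, Z i => ∀ i ∈ J, z' i = z i), w z'
      = (Fintype.card (Z j)) •
        ∑ z' ∈ Finset.univ.filter (fun z' : ∀ i, Z i => ∀ i ∈ insert j J, z' i = z i), w z' := by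
    rw [← Finset.sum_fiberwise_of_maps_to (g := fun z' : ∀ i, Z i => z' j)
      (t := (Finset.univ : Finset (Z j))) (fun _ _ => Finset.mem_univ _)]
    rw [Finset.card_univ.symm, ← Finset.sum_const]
    refine Finset.sum_congr rfl fun a _ => ?_
    refine Finset.sum_nbij' (fun z' => Function.update z' j (z j))
      (fun z' => Function.update z' j a) ?_ ?_ ?_ ?_ ?_
    · intro z' hz'
      simp only [Finset.mem_filter, Finset.mem_univ, true_and] at hz' ⊢
      intro i hi
      rcases Finset.mem_insert.1 hi with rfl | hi
      · simp
      · have : i ≠ j := fun h => hjJ (h ▸ hi)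
        rw [Function.update_of_ne this]
        exact hz'.1 i hi
    · intro z' hz'
      simp only [Finset.mem_filter, Finset.mem_univ, true_and] at hz' ⊢
      constructor
      · intro i hi
        have : i ≠ j := fun h => hjJ (h ▸ hi)
        rw [Function.update_of_ne this]
        exact hz' i (Finset.mem_insert_of_mem hi)
      · simp
    · intro z' hz'
      simp only [Finset.mem_filter, Finset.mem_univ, true_and] at hz'
      rw [Function.update_idem, ← hz'.2, Function.update_eq_self]
    · intro z' hz'
      simp only [Finset.mem_filter, Finset.mem_univ, true_and] at hz'
      rw [Function.update_idem, ← hz' j (Finset.mem_insert_self j J), Function.update_eq_self]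
    · intro z' _
      rw [hw]
  have hprod : ∏ i ∈ Jᶜ, (Fintype.card (Z i) : ℝ)
      = (Fintype.card (Z j) : ℝ) * ∏ i ∈ (insert j J)ᶜ, (Fintype.card (Z i) : ℝ) := by
    rw [Finset.compl_insert]
    exact (Finset.mul_prod_erase Jᶜ (fun i => (Fintype.card (Z i) : ℝ))
      (Finset.mem_compl.2 hjJ)).symm
  have hcard : (Fintype.card (Z j) : ℝ) ≠ 0 := by
    exact_mod_cast Fintype.card_ne_zero
  have hprodne : (∏ i ∈ (insert j J)ᶜ, (Fintype.card (Z i) : ℝ)) ≠ 0 :=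
    Finset.prod_ne_zero_iff.2 fun i _ => by exact_mod_cast Fintype.card_ne_zero
  unfold piAvg
  rw [key, hprod, ← Nat.cast_smul_eq_nsmul ℝ, smul_smul]
  congr 1
  field_simp

lemma Qop_eq_zero_of_indep {S : Finset ι} {j : ι} (hj : j ∈ S)
    (w : (∀ i, Z i) → V) (hw : ∀ z a, w (Function.update z j a) = w z) (z : ∀ i, Z i) :
    Qop S w z = 0 := by
  classical
  have hS : S = insert j (S.erase j) := (Finset.insert_erase hj).symm
  have hjE : j ∉ S.erase j := Finset.notMem_erase j S
  rw [hS]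
  unfold Qop
  rw [Finset.sum_apply]
  rw [Finset.sum_powerset_insert hjE]
  rw [← Finset.sum_add_distrib]
  refine Finset.sum_eq_zero fun J hJ => ?_
  have hJE : J ⊆ S.erase j := Finset.mem_powerset.1 hJ
  have hjJ : j ∉ J := fun h => hjE (hJE h)
  have h1 : insert j (S.erase j) \ J = insert j (S.erase j \ J) :=
    Finset.insert_sdiff_of_notMem _ hjJ
  have h2 : insert j (S.erase j) \ insert j J = S.erase j \ J := by
    ext i
    simp only [Finset.mem_sdiff, Finset.mem_insert, not_or]
    constructor
    · rintro ⟨(rfl | hi), hij, hiJ⟩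
      · exact absurd rfl hij
      · exact ⟨hi, hiJ⟩
    · rintro ⟨hi, hiJ⟩
      exact ⟨Or.inr hi, fun h => hjE (h ▸ hi), hiJ⟩
  have h3 : (insert j (S.erase j \ J)).card = (S.erase j \ J).card + 1 :=
    Finset.card_insert_of_notMem (fun h => hjE (Finset.mem_sdiff.1 h).1)
  have h4 : piAvg (insert j J) w z = piAvg J w z := piAvg_insert_of_indep hjJ w hw z
  rw [Pi.smul_apply, Pi.smul_apply, h1, h2, h3, h4, ← add_smul, pow_succ]
  have hz0 : ((-1 : ℝ) ^ (S.erase j \ J).card * (-1) + (-1 : ℝ) ^ (S.erase j \ J).card) = 0 := by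
    ring
  rw [hz0, zero_smul]

lemma piAvg_univ (w : (∀ i, Z i) → V) (z : ∀ i, Z i) :
    piAvg Finset.univ w z = w z := by
  unfold piAvg
  have h1 : (Finset.univ : Finset ι)ᶜ = ∅ := Finset.compl_univ
  have h2 : Finset.univ.filter (fun z' : ∀ i, Z i => ∀ i ∈ Finset.univ, z' i = z i) = {z} := by
    ext z'
    simp [funext_iff]
  rw [h1, h2, Finset.prod_empty, inv_one, one_smul, Finset.sum_singleton]

lemma sum_Qop (w : (∀ i, Z i) → V) (z : ∀ i, Z i) :
    ∑ S ∈ (Finset.univ : Finset ι).powerset, Qop S w z = w z := by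
  classical
  have expand : ∑ S ∈ (Finset.univ : Finset ι).powerset, Qop S w z
      = ∑ S ∈ (Finset.univ : Finset ι).powerset, ∑ J ∈ S.powerset,
          ((-1 : ℝ) ^ (S \ J).card) • piAvg J w z := by
    refine Finset.sum_congr rfl fun S _ => ?_
    rw [Qop, Finset.sum_apply]
    exact Finset.sum_congr rfl fun J _ => rfl
  rw [expand]
  rw [Finset.sum_comm' (s' := fun J => (Finset.univ : Finset ι).powerset.filter (fun S => J ⊆ S))
    (t' := (Finset.univ : Finset ι).powerset)
    (by intro S J; simp [Finset.mem_powerset, Finset.subset_univ])]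
  have inner : ∀ J : Finset ι,
      ∑ S ∈ (Finset.univ : Finset ι).powerset.filter (fun S => J ⊆ S),
        ((-1 : ℝ) ^ (S \ J).card) • piAvg J w z
      = (if Jᶜ = ∅ then (1 : ℝ) else 0) • piAvg J w z := by
    intro J
    rw [← Finset.sum_smul]
    congr 1
    have reidx : ∑ S ∈ (Finset.univ : Finset ι).powerset.filter (fun S => J ⊆ S),
        ((-1 : ℝ) ^ (S \ J).card) = ∑ T ∈ Jᶜ.powerset, ((-1 : ℝ) ^ T.card) := by
      refine Finset.sum_nbij' (fun S => S \ J) (fun T => J ∪ T) ?_ ?_ ?_ ?_ ?_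
      · intro S hS
        rw [Finset.mem_powerset]
        intro i hi
        rw [Finset.mem_compl]
        exact (Finset.mem_sdiff.1 hi).2
      · intro T hT
        simp only [Finset.mem_filter, Finset.mem_powerset]
        exact ⟨Finset.subset_univ _, Finset.subset_union_left⟩
      · intro S hS
        simp only [Finset.mem_filter, Finset.mem_powerset] at hS
        exact Finset.union_sdiff_of_subset hS.2
      · intro T hT
        rw [Finset.mem_powerset] at hT
        refine Finset.union_sdiff_cancel_left ?_
        rw [Finset.disjoint_left]
        intro i hiJ hiT
        exact (Finset.mem_compl.1 (hT hiT)) hiJ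
      · intro S hS
        rfl
    rw [reidx]
    have : ∑ T ∈ Jᶜ.powerset, ((-1 : ℝ) ^ T.card)
        = ((∑ T ∈ Jᶜ.powerset, ((-1 : ℤ) ^ T.card) : ℤ) : ℝ) := by
      push_cast
      rfl
    rw [this, Finset.sum_powerset_neg_one_pow_card]
    split <;> simp
  rw [Finset.sum_congr rfl (fun J _ => inner J)]
  rw [Finset.sum_eq_single Finset.univ]
  · rw [Finset.compl_univ, if_pos rfl, one_smul, piAvg_univ]
  · intro J _ hJ
    rw [if_neg, zero_smul]
    intro h
    exact hJ ((Finset.compl_eq_empty_iff _).1 h)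
  · intro h
    exact absurd (Finset.mem_powerset.2 (Finset.subset_univ _)) h

end General

universe u

/-- Combined family of factors, indexed by `Fin m ⊕ Fin n`. -/
def sumFam {m n : ℕ} (X : Fin m → Type u) (Y : Fin n → Type u) : Fin m ⊕ Fin n → Type u :=
  Sum.elim X Y

instance sumFam.fintype {m n : ℕ} (X : Fin m → Type u) (Y : Fin n → Type u)
    [∀ i, Fintype (X i)] [∀ j, Fintype (Y j)] : ∀ s, Fintype (sumFam X Y s)
  | .inl i => inferInstanceAs (Fintype (X i))
  | .inr j => inferInstanceAs (Fintype (Y j))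

instance sumFam.decEq {m n : ℕ} (X : Fin m → Type u) (Y : Fin n → Type u)
    [∀ i, DecidableEq (X i)] [∀ j, DecidableEq (Y j)] : ∀ s, DecidableEq (sumFam X Y s)
  | .inl i => inferInstanceAs (DecidableEq (X i))
  | .inr j => inferInstanceAs (DecidableEq (Y j))

instance sumFam.nonempty {m n : ℕ} (X : Fin m → Type u) (Y : Fin n → Type u)
    [∀ i, Nonempty (X i)] [∀ j, Nonempty (Y j)] : ∀ s, Nonempty (sumFam X Y s)
  | .inl i => inferInstanceAs (Nonempty (X i))
  | .inr j => inferInstanceAs (Nonempty (Y j))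

/-- A pair `(x, y)` of tuples viewed as a single tuple indexed by `Fin m ⊕ Fin n`. -/
def glue {m n : ℕ} {X : Fin m → Type u} {Y : Fin n → Type u}
    (x : ∀ i, X i) (y : ∀ j, Y j) : ∀ s, sumFam X Y s
  | .inl i => x i
  | .inr j => y j

/-- First projection of a combined tuple. -/
def projX {m n : ℕ} {X : Fin m → Type u} {Y : Fin n → Type u}
    (z : ∀ s, sumFam X Y s) : ∀ i, X i := fun i => z (.inl i)

/-- Second projection of a combined tuple. -/
def projY {m n : ℕ} {X : Fin m → Type u} {Y : Fin n → Type u}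
    (z : ∀ s, sumFam X Y s) : ∀ j, Y j := fun j => z (.inr j)


section Glue
variable {m n : ℕ} {X : Fin m → Type u} {Y : Fin n → Type u}
    [∀ i, Fintype (X i)] [∀ i, Nonempty (X i)] [∀ i, DecidableEq (X i)]
    [∀ j, Fintype (Y j)] [∀ j, Nonempty (Y j)] [∀ j, DecidableEq (Y j)]
    {V : Type*} [NormedAddCommGroup V] [InnerProductSpace ℝ V]

lemma glue_projX_projY (z : ∀ s, sumFam X Y s) : glue (projX z) (projY z) = z :=
  funext fun s => by cases s <;> rfl

lemma piAvg_glue (u : (∀ i, X i) → V) (v : (∀ j, Y j) → V)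
    (I : Finset (Fin m)) (J : Finset (Fin n)) (x : ∀ i, X i) (y : ∀ j, Y j) :
    piAvg (I.disjSum J) (fun z : ∀ s, sumFam X Y s => ⟪u (projX z), v (projY z)⟫) (glue x y)
      = ⟪piAvg I u x, piAvg J v y⟫ := by
  classical
  have hcompl : (I.disjSum J)ᶜ = Iᶜ.disjSum Jᶜ := by
    ext s
    cases s <;> simp
  have hprod : ∏ s ∈ (I.disjSum J)ᶜ, (Fintype.card (sumFam X Y s) : ℝ)
      = (∏ i ∈ Iᶜ, (Fintype.card (X i) : ℝ)) * ∏ j ∈ Jᶜ, (Fintype.card (Y j) : ℝ) := by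
    rw [hcompl, Finset.prod_disjSum]
    congr 1
  have hsum : ∑ z' ∈ Finset.univ.filter
        (fun z' : ∀ s, sumFam X Y s => ∀ s ∈ I.disjSum J, z' s = glue x y s),
        ⟪u (projX z'), v (projY z')⟫
      = ∑ p ∈ (Finset.univ.filter (fun x' : ∀ i, X i => ∀ i ∈ I, x' i = x i)) ×ˢ
          (Finset.univ.filter (fun y' : ∀ j, Y j => ∀ j ∈ J, y' j = y j)),
          ⟪u p.1, v p.2⟫ := by
    refine Finset.sum_nbij' (fun z' => (projX z', projY z'))
      (fun p => glue p.1 p.2) ?_ ?_ ?_ ?_ ?_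
    · intro z' hz'
      simp only [Finset.mem_filter, Finset.mem_univ, true_and, Finset.mem_product] at hz' ⊢
      constructor
      · intro i hi
        exact hz' (Sum.inl i) (Finset.inl_mem_disjSum.2 hi)
      · intro j hj
        exact hz' (Sum.inr j) (Finset.inr_mem_disjSum.2 hj)
    · intro p hp
      simp only [Finset.mem_filter, Finset.mem_univ, true_and, Finset.mem_product] at hp ⊢
      intro s hs
      cases s with
      | inl i => exact hp.1 i (Finset.inl_mem_disjSum.1 hs)
      | inr j => exact hp.2 j (Finset.inr_mem_disjSum.1 hs)
    · intro z' _
      exact glue_projX_projY z'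
    · intro p _
      rfl
    · intro z' _
      rfl
  unfold piAvg
  rw [hsum, hprod, Finset.sum_product]
  have : ∑ x' ∈ Finset.univ.filter (fun x' : ∀ i, X i => ∀ i ∈ I, x' i = x i),
        ∑ y' ∈ Finset.univ.filter (fun y' : ∀ j, Y j => ∀ j ∈ J, y' j = y j),
          ⟪u x', v y'⟫
      = ⟪∑ x' ∈ Finset.univ.filter (fun x' : ∀ i, X i => ∀ i ∈ I, x' i = x i), u x',
         ∑ y' ∈ Finset.univ.filter (fun y' : ∀ j, Y j => ∀ j ∈ J, y' j = y j), v y'⟫ := by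
    rw [sum_inner]
    exact Finset.sum_congr rfl fun x' _ => (inner_sum _ _ _).symm
  rw [this, real_inner_smul_left, real_inner_smul_right, smul_eq_mul, mul_inv, mul_assoc]
  congr!

lemma disjSum_sdiff (I I' : Finset (Fin m)) (J J' : Finset (Fin n)) :
    (I.disjSum J) \ (I'.disjSum J') = (I \ I').disjSum (J \ J') := by
  ext s
  cases s <;> simp

lemma Qop_glue (u : (∀ i, X i) → V) (v : (∀ j, Y j) → V)
    (I : Finset (Fin m)) (J : Finset (Fin n)) (x : ∀ i, X i) (y : ∀ j, Y j) :
    Qop (I.disjSum J) (fun z : ∀ s, sumFam X Y s => ⟪u (projX z), v (projY z)⟫) (glue x y)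
      = ⟪Qop I u x, Qop J v y⟫ := by
  classical
  have lhs : Qop (I.disjSum J)
        (fun z : ∀ s, sumFam X Y s => ⟪u (projX z), v (projY z)⟫) (glue x y)
      = ∑ p ∈ I.powerset ×ˢ J.powerset,
          (((-1 : ℝ) ^ (I \ p.1).card) * ((-1 : ℝ) ^ (J \ p.2).card)) *
            ⟪piAvg p.1 u x, piAvg p.2 v y⟫ := by
    rw [Qop, Finset.sum_apply]
    refine Finset.sum_nbij' (fun K => (K.toLeft, K.toRight))
      (fun p => p.1.disjSum p.2) ?_ ?_ ?_ ?_ ?_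
    · intro K hK
      rw [Finset.mem_powerset] at hK
      simp only [Finset.mem_product, Finset.mem_powerset]
      exact ⟨Finset.toLeft_subset_toLeft hK |>.trans (by rw [Finset.toLeft_disjSum]),
        Finset.toRight_subset_toRight hK |>.trans (by rw [Finset.toRight_disjSum])⟩
    · intro p hp
      simp only [Finset.mem_product, Finset.mem_powerset] at hp
      rw [Finset.mem_powerset]
      intro s hs
      cases s with
      | inl i => exact Finset.inl_mem_disjSum.2 (hp.1 (Finset.inl_mem_disjSum.1 hs))
      | inr j => exact Finset.inr_mem_disjSum.2 (hp.2 (Finset.inr_mem_disjSum.1 hs))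
    · intro K _
      exact Finset.toLeft_disjSum_toRight
    · intro p _
      rw [Finset.toLeft_disjSum, Finset.toRight_disjSum]
    · intro K hK
      rw [Finset.mem_powerset] at hK
      have hK' : K = K.toLeft.disjSum K.toRight := Finset.toLeft_disjSum_toRight.symm
      rw [Pi.smul_apply]
      conv_lhs => rw [hK']
      rw [piAvg_glue, disjSum_sdiff, Finset.card_disjSum, pow_add, smul_eq_mul]
  rw [lhs, Qop, Qop, Finset.sum_apply, Finset.sum_apply, sum_inner, Finset.sum_product]
  refine Finset.sum_congr rfl fun I' _ => ?_
  rw [Pi.smul_apply, real_inner_smul_left, inner_sum, Finset.mul_sum]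
  refine Finset.sum_congr rfl fun J' _ => ?_
  rw [Pi.smul_apply, real_inner_smul_right]
  ring

end Glue

/-- The marginal density of `q` on the coordinates in `S`, viewed as a function of the
full tuple (depending only on the `S`-coordinates). -/
def marg {ι : Type*} [Fintype ι] [DecidableEq ι] {Z : ι → Type*} [∀ i, Fintype (Z i)]
    [∀ i, DecidableEq (Z i)] (S : Finset ι) (q : (∀ i, Z i) → ℝ) (z : ∀ i, Z i) : ℝ :=
  ∑ z' ∈ Finset.univ.filter (fun z' : ∀ i, Z i => ∀ i ∈ S, z' i = z i), q z'

/-- main theorem: for the softmax model, the factorization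
`P(y|x) = f(z_A, z_C) · g(z_B, z_C) · h(x)` holds if and only if
`⟨u_I(x), v_J(y)⟩ = 0` for all `I ⊆ [m]`, `J ⊆ [n]` with `J ≠ ∅` such that the disjoint
union `I ⊔ J` meets both `A` and `B`. -/
theorem factorization_iff_interactions_orthogonal {m n : ℕ}
    (X : Fin m → Type u) (Y : Fin n → Type u)
    [∀ i, Fintype (X i)] [∀ i, Nonempty (X i)] [∀ i, DecidableEq (X i)]
    [∀ j, Fintype (Y j)] [∀ j, Nonempty (Y j)] [∀ j, DecidableEq (Y j)]
    (V : Type*) [NormedAddCommGroup V] [InnerProductSpace ℝ V] [FiniteDimensional ℝ V]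
    (u : (∀ i, X i) → V) (v : (∀ j, Y j) → V)
    (P : (∀ i, X i) → (∀ j, Y j) → ℝ)
    (hP : ∀ x y, P x y =
      Real.exp ⟪u x, v y⟫ / ∑ y' : ∀ j, Y j, Real.exp ⟪u x, v y'⟫)
    (A B C : Finset (Fin m ⊕ Fin n))
    (hAB : Disjoint A B) (hAC : Disjoint A C) (hBC : Disjoint B C)
    (hABC : A ∪ B ∪ C = Finset.univ) :
    (∃ (f g : (∀ s, sumFam X Y s) → ℝ) (h : (∀ i, X i) → ℝ),
      (∀ z z' : ∀ s, sumFam X Y s, (∀ s ∈ A ∪ C, z s = z' s) → f z = f z') ∧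
      (∀ z z' : ∀ s, sumFam X Y s, (∀ s ∈ B ∪ C, z s = z' s) → g z = g z') ∧
      (∀ x, 0 < h x) ∧
      (∀ (x : ∀ i, X i) (y : ∀ j, Y j), P x y = f (glue x y) * g (glue x y) * h x)) ↔
    (∀ (I : Finset (Fin m)) (J : Finset (Fin n)), J ≠ ∅ →
      ((I.disjSum J) ∩ A).Nonempty → ((I.disjSum J) ∩ B).Nonempty →
      ∀ (x : ∀ i, X i) (y : ∀ j, Y j), ⟪Qop I u x, Qop J v y⟫ = 0) := by
  classical
  have hnY : Nonempty (∀ j, Y j) := ⟨fun j => Classical.arbitrary _⟩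
  have hZpos : ∀ x : ∀ i, X i, 0 < ∑ y' : ∀ j, Y j, Real.exp ⟪u x, v y'⟫ := fun x =>
    Finset.sum_pos (fun y' _ => Real.exp_pos _) Finset.univ_nonempty
  have hcoverB : ∀ s : Fin m ⊕ Fin n, s ∉ B → s ∈ A ∪ C := by
    intro s hs
    have hmem : s ∈ A ∪ B ∪ C := hABC ▸ Finset.mem_univ s
    rcases Finset.mem_union.1 hmem with hmem | hmem
    · rcases Finset.mem_union.1 hmem with hmem | hmem
      · exact Finset.mem_union_left _ hmem
      · exact absurd hmem hs
    · exact Finset.mem_union_right _ hmem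
  have hcoverA : ∀ s : Fin m ⊕ Fin n, s ∉ A → s ∈ B ∪ C := by
    intro s hs
    have hmem : s ∈ A ∪ B ∪ C := hABC ▸ Finset.mem_univ s
    rcases Finset.mem_union.1 hmem with hmem | hmem
    · rcases Finset.mem_union.1 hmem with hmem | hmem
      · exact absurd hmem hs
      · exact Finset.mem_union_left _ hmem
    · exact Finset.mem_union_right _ hmem
  constructor
  · rintro ⟨f, g, h, hf, hg, hh, hfac⟩
    have hPpos : ∀ x y, 0 < P x y := by
      intro x y
      rw [hP]
      exact div_pos (Real.exp_pos _) (hZpos x)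
    have hfg : ∀ z : ∀ s, sumFam X Y s, 0 < f z * g z := by
      intro z
      have h1 := hfac (projX z) (projY z)
      rw [glue_projX_projY] at h1
      have h2 := hPpos (projX z) (projY z)
      rw [h1] at h2
      nlinarith [hh (projX z)]
    set σ : (∀ s, sumFam X Y s) → ℝ := fun z => if 0 < f z then 1 else -1 with hσdef
    have hσC : ∀ z z' : ∀ s, sumFam X Y s, (∀ s ∈ C, z s = z' s) → σ z = σ z' := by
      intro z z' hzz
      have hgz' : g z' ≠ 0 := fun h0 => by
        have := hfg z'
        rw [h0, mul_zero] at this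
        exact lt_irrefl _ this
      have hmix : 0 < f z * g z' := by
        set w : ∀ s, sumFam X Y s := fun s => if hs : s ∈ A then z s else z' s with hwdef
        have hfw : f w = f z := by
          refine hf w z ?_
          intro s hs
          rcases Finset.mem_union.1 hs with hsA | hsC
          · simp [hwdef, hsA]
          · have hsA : s ∉ A := fun hmem => (Finset.disjoint_left.1 hAC) hmem hsC
            simp [hwdef, hsA, (hzz s hsC).symm]
        have hgw : g w = g z' := by
          refine hg w z' ?_
          intro s hs
          have hsA : s ∉ A := by
            rcases Finset.mem_union.1 hs with hsB | hsC
            · exact fun hmem => (Finset.disjoint_left.1 hAB) hmem hsB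
            · exact fun hmem => (Finset.disjoint_left.1 hAC) hmem hsC
          simp [hwdef, hsA]
        have := hfg w
        rwa [hfw, hgw] at this
      have h2 := hfg z'
      have hff : 0 < f z * f z' := by nlinarith [mul_self_pos.2 hgz']
      simp only [hσdef]
      by_cases hz : 0 < f z
      · have : 0 < f z' := by nlinarith
        simp [hz, this]
      · have hz2 : ¬ 0 < f z' := fun h' => hz (by nlinarith)
        simp [hz, hz2]
    set f' : (∀ s, sumFam X Y s) → ℝ := fun z => σ z * f z with hf'def
    set g' : (∀ s, sumFam X Y s) → ℝ := fun z => σ z * g z with hg'def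
    have hσsq : ∀ z, σ z * σ z = 1 := by
      intro z
      simp only [hσdef]
      split <;> norm_num
    have hfne : ∀ z, f z ≠ 0 := fun z h0 => by
      have := hfg z
      rw [h0, zero_mul] at this
      exact lt_irrefl _ this
    have hgne : ∀ z, g z ≠ 0 := fun z h0 => by
      have := hfg z
      rw [h0, mul_zero] at this
      exact lt_irrefl _ this
    have hf'pos : ∀ z, 0 < f' z := by
      intro z
      simp only [hf'def, hσdef]
      split_ifs with hc
      · linarith
      · have : f z < 0 := lt_of_le_of_ne (not_lt.1 hc) (hfne z)
        nlinarith
    have hg'pos : ∀ z, 0 < g' z := by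
      intro z
      have h1 := hfg z
      simp only [hg'def, hσdef]
      split_ifs with hc
      · have : 0 < g z := by nlinarith
        linarith
      · have hfz : f z < 0 := lt_of_le_of_ne (not_lt.1 hc) (hfne z)
        have : g z < 0 := by nlinarith
        nlinarith
    have hf'inv : ∀ z z' : ∀ s, sumFam X Y s, (∀ s ∈ A ∪ C, z s = z' s) → f' z = f' z' := by
      intro z z' hzz
      simp only [hf'def]
      rw [hf z z' hzz, hσC z z' (fun s hs => hzz s (Finset.mem_union_right _ hs))]
    have hg'inv : ∀ z z' : ∀ s, sumFam X Y s, (∀ s ∈ B ∪ C, z s = z' s) → g' z = g' z' := by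
      intro z z' hzz
      simp only [hg'def]
      rw [hg z z' hzz, hσC z z' (fun s hs => hzz s (Finset.mem_union_right _ hs))]
    have hFdec : ∀ z : ∀ s, sumFam X Y s,
        ⟪u (projX z), v (projY z)⟫ = Real.log (f' z) + (Real.log (g' z)
          + (Real.log (h (projX z))
            + Real.log (∑ y' : ∀ j, Y j, Real.exp ⟪u (projX z), v y'⟫))) := by
      intro z
      have hZ := hZpos (projX z)
      have hfacz := hfac (projX z) (projY z)
      rw [glue_projX_projY] at hfacz
      have hPz := hP (projX z) (projY z)
      have hfgz : f' z * g' z = f z * g z := by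
        simp only [hf'def, hg'def]
        rw [mul_mul_mul_comm, hσsq, one_mul]
      have hexp : Real.exp ⟪u (projX z), v (projY z)⟫
          = f' z * g' z * (h (projX z) * ∑ y' : ∀ j, Y j, Real.exp ⟪u (projX z), v y'⟫) := by
        rw [hfgz]
        have hstep : Real.exp ⟪u (projX z), v (projY z)⟫
            = P (projX z) (projY z) * ∑ y' : ∀ j, Y j, Real.exp ⟪u (projX z), v y'⟫ := by
          rw [hPz]
          field_simp
        rw [hstep, hfacz]
        ring
      have h1 : ⟪u (projX z), v (projY z)⟫
          = Real.log (Real.exp ⟪u (projX z), v (projY z)⟫) := (Real.log_exp _).symm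
      rw [h1, hexp]
      have ha := hf'pos z
      have hb := hg'pos z
      have hc := hh (projX z)
      rw [Real.log_mul (ne_of_gt (mul_pos ha hb)) (ne_of_gt (mul_pos hc hZ)),
        Real.log_mul (ne_of_gt ha) (ne_of_gt hb),
        Real.log_mul (ne_of_gt hc) (ne_of_gt hZ)]
      ring
    intro I J hJ hIA hIB x y
    rw [← Qop_glue u v I J x y]
    have hfun : (fun z : ∀ s, sumFam X Y s => ⟪u (projX z), v (projY z)⟫)
        = fun z => Real.log (f' z) + (Real.log (g' z)
          + (Real.log (h (projX z))
            + Real.log (∑ y' : ∀ j, Y j, Real.exp ⟪u (projX z), v y'⟫))) :=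
      funext fun z => hFdec z
    rw [hfun, Qop_add, Qop_add]
    obtain ⟨sB, hsB⟩ := hIB
    obtain ⟨sA, hsA⟩ := hIA
    obtain ⟨j0, hj0⟩ := Finset.nonempty_iff_ne_empty.2 hJ
    have hsBmem := Finset.mem_inter.1 hsB
    have hsAmem := Finset.mem_inter.1 hsA
    have e1 : Qop (I.disjSum J) (fun z => Real.log (f' z)) (glue x y) = 0 := by
      refine Qop_eq_zero_of_indep hsBmem.1 _ ?_ _
      intro z a
      refine congrArg Real.log (hf'inv _ _ ?_)
      intro s hs
      have hne : s ≠ sB := by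
        rintro rfl
        rcases Finset.mem_union.1 hs with hmem | hmem
        · exact (Finset.disjoint_left.1 hAB) hmem hsBmem.2
        · exact (Finset.disjoint_left.1 hBC) hsBmem.2 hmem
      exact Function.update_of_ne hne _ _
    have e2 : Qop (I.disjSum J) (fun z => Real.log (g' z)) (glue x y) = 0 := by
      refine Qop_eq_zero_of_indep hsAmem.1 _ ?_ _
      intro z a
      refine congrArg Real.log (hg'inv _ _ ?_)
      intro s hs
      have hne : s ≠ sA := by
        rintro rfl
        rcases Finset.mem_union.1 hs with hmem | hmem
        · exact (Finset.disjoint_left.1 hAB) hsAmem.2 hmem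
        · exact (Finset.disjoint_left.1 hAC) hsAmem.2 hmem
      exact Function.update_of_ne hne _ _
    have e3 : Qop (I.disjSum J) (fun z => Real.log (h (projX z))
        + Real.log (∑ y' : ∀ j, Y j, Real.exp ⟪u (projX z), v y'⟫)) (glue x y) = 0 := by
      refine Qop_eq_zero_of_indep (Finset.inr_mem_disjSum.2 hj0) _ ?_ _
      intro z a
      have hproj : projX (Function.update z (Sum.inr j0) a) = projX z := by
        funext i
        exact Function.update_of_ne (fun hc => Sum.inl_ne_inr hc) _ _
      rw [hproj]
    rw [e1, e2, e3]
    ring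
  · intro hyp
    have y₀ : ∀ j, Y j := Classical.arbitrary _
    set T := (Finset.univ : Finset (Fin m)).powerset ×ˢ (Finset.univ : Finset (Fin n)).powerset
      with hTdef
    have hdec : ∀ (x : ∀ i, X i) (y : ∀ j, Y j),
        ⟪u x, v y⟫ = ∑ p ∈ T, ⟪Qop p.1 u x, Qop p.2 v y⟫ := by
      intro x y
      have h2 := sum_Qop (fun z : ∀ s, sumFam X Y s => ⟪u (projX z), v (projY z)⟫) (glue x y)
      refine Eq.trans h2.symm ?_
      refine Finset.sum_nbij' (fun S => (S.toLeft, S.toRight)) (fun p => p.1.disjSum p.2)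
        ?_ ?_ ?_ ?_ ?_
      · intro S _
        simp [hTdef]
      · intro p _
        simp
      · intro S _
        exact Finset.toLeft_disjSum_toRight
      · intro p _
        rw [Finset.toLeft_disjSum, Finset.toRight_disjSum]
      · intro S _
        conv_lhs => rw [← Finset.toLeft_disjSum_toRight (u := S)]
        exact Qop_glue u v S.toLeft S.toRight x y
    refine ⟨fun z => Real.exp (∑ p ∈ T.filter (fun p => ¬ (p.2 = ∅) ∧ (p.1.disjSum p.2) ∩ B = ∅),
        ⟪Qop p.1 u (projX z), Qop p.2 v (projY z)⟫),
      fun z => Real.exp (∑ p ∈ T.filter (fun p => ¬ (p.2 = ∅) ∧ ¬ ((p.1.disjSum p.2) ∩ B = ∅)),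
        ⟪Qop p.1 u (projX z), Qop p.2 v (projY z)⟫),
      fun x => Real.exp (∑ p ∈ T.filter (fun p => p.2 = ∅), ⟪Qop p.1 u x, Qop p.2 v y₀⟫)
        / (∑ y' : ∀ j, Y j, Real.exp ⟪u x, v y'⟫), ?_, ?_, ?_, ?_⟩
    · intro z z' hzz
      dsimp only
      congr 1
      refine Finset.sum_congr rfl fun p hp => ?_
      rw [Finset.mem_filter] at hp
      have hsub : ∀ s ∈ p.1.disjSum p.2, s ∈ A ∪ C := by
        intro s hs
        refine hcoverB s (fun hsB => ?_)
        have hmem : s ∈ (p.1.disjSum p.2) ∩ B := Finset.mem_inter.2 ⟨hs, hsB⟩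
        rw [hp.2.2] at hmem
        exact Finset.notMem_empty s hmem
      rw [Qop_congr (z := projX z) (z' := projX z') p.1 u
          (fun i hi => hzz _ (hsub _ (Finset.inl_mem_disjSum.2 hi))),
        Qop_congr (z := projY z) (z' := projY z') p.2 v
          (fun j hj => hzz _ (hsub _ (Finset.inr_mem_disjSum.2 hj)))]
    · intro z z' hzz
      dsimp only
      congr 1
      refine Finset.sum_congr rfl fun p hp => ?_
      rw [Finset.mem_filter] at hp
      by_cases hA : (p.1.disjSum p.2) ∩ A = ∅
      · have hsub : ∀ s ∈ p.1.disjSum p.2, s ∈ B ∪ C := by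
          intro s hs
          refine hcoverA s (fun hsA => ?_)
          have hmem : s ∈ (p.1.disjSum p.2) ∩ A := Finset.mem_inter.2 ⟨hs, hsA⟩
          rw [hA] at hmem
          exact Finset.notMem_empty s hmem
        rw [Qop_congr (z := projX z) (z' := projX z') p.1 u
            (fun i hi => hzz _ (hsub _ (Finset.inl_mem_disjSum.2 hi))),
          Qop_congr (z := projY z) (z' := projY z') p.2 v
            (fun j hj => hzz _ (hsub _ (Finset.inr_mem_disjSum.2 hj)))]
      · have hzero := hyp p.1 p.2 hp.2.1
          (Finset.nonempty_iff_ne_empty.2 hA)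
          (Finset.nonempty_iff_ne_empty.2 hp.2.2)
        rw [hzero (projX z) (projY z), hzero (projX z') (projY z')]
    · intro x
      exact div_pos (Real.exp_pos _) (hZpos x)
    · intro x y
      have h0 : ∑ p ∈ T.filter (fun p => p.2 = ∅), ⟪Qop p.1 u x, Qop p.2 v y₀⟫
          = ∑ p ∈ T.filter (fun p => p.2 = ∅), ⟪Qop p.1 u x, Qop p.2 v y⟫ := by
        refine Finset.sum_congr rfl fun p hp => ?_
        rw [Finset.mem_filter] at hp
        rw [Qop_congr (z := y₀) (z' := y) p.2 v
          (fun j hj => (Finset.notMem_empty j (hp.2 ▸ hj)).elim)]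
      have hsplit : ∑ p ∈ T, ⟪Qop p.1 u x, Qop p.2 v y⟫
          = (∑ p ∈ T.filter (fun p => ¬ (p.2 = ∅) ∧ (p.1.disjSum p.2) ∩ B = ∅),
              ⟪Qop p.1 u x, Qop p.2 v y⟫)
            + (∑ p ∈ T.filter (fun p => ¬ (p.2 = ∅) ∧ ¬ ((p.1.disjSum p.2) ∩ B = ∅)),
              ⟪Qop p.1 u x, Qop p.2 v y⟫)
            + (∑ p ∈ T.filter (fun p => p.2 = ∅), ⟪Qop p.1 u x, Qop p.2 v y⟫) := by
        rw [← Finset.sum_filter_add_sum_filter_not T (fun p => p.2 = ∅)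
          (fun p => ⟪Qop p.1 u x, Qop p.2 v y⟫)]
        rw [← Finset.sum_filter_add_sum_filter_not (T.filter (fun p => ¬ p.2 = ∅))
          (fun p => (p.1.disjSum p.2) ∩ B = ∅) (fun p => ⟪Qop p.1 u x, Qop p.2 v y⟫)]
        rw [Finset.filter_filter, Finset.filter_filter]
        ring
      dsimp only
      rw [show projX (glue x y) = x from rfl, show projY (glue x y) = y from rfl,
        hP x y, hdec x y, hsplit, h0, Real.exp_add, Real.exp_add]
      ring
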